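/- The family of sets [s] = {f ∈ D(𝔠)^{𝔠⁺} : s ⊆ f}, where s ranges over countable partial functions from 𝔠⁺ to D(𝔠) that are not injective, covers D(𝔠)^{𝔠⁺}, but no subfamily of cardinality at most 𝔠 covers D(𝔠)^{𝔠⁺}. -/

import Mathlib

open Set Cardinal TopologicalSpace

universe u

/-- The family of sets `[s] = {f ∈ D(𝔠)^{𝔠⁺} : s ⊆ f}`, where `s` ranges over countable
partial functions from `𝔠⁺` to `D(𝔠)` that are not injective, covers `D(𝔠)^{𝔠⁺}`, but no
subfamily of cardinality at most `𝔠` covers `D(𝔠)^{𝔠⁺}`. Partial functions are encoded as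
functions `I → Option D`. -/
theorem cover_no_continuum_subcover
    (I : Type u) (hI : #I = Order.succ continuum)
    (D : Type u) (hD : #D = continuum)
    (𝒰 : Set (Set (I → D)))
    (h𝒰 : 𝒰 = {T | ∃ s : I → Option D, {i | s i ≠ none}.Countable ∧
      (∃ i j : I, i ≠ j ∧ s i ≠ none ∧ s i = s j) ∧
      T = {f : I → D | ∀ i : I, ∀ d : D, s i = some d → f i = d}}) :
    ⋃₀ 𝒰 = Set.univ ∧ ∀ 𝒱 ⊆ 𝒰, #𝒱 ≤ continuum → ⋃₀ 𝒱 ≠ Set.univ := by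
  classical
  have hDne : Nonempty D := Cardinal.mk_ne_zero_iff.1 (by rw [hD]; exact continuum_ne_zero)
  subst h𝒰
  constructor
  · ext f
    simp only [Set.mem_univ, iff_true, Set.mem_sUnion]
    have hni : ¬ Function.Injective f := by
      intro hf
      have h1 := Cardinal.mk_le_of_injective hf
      rw [hI, hD] at h1
      exact absurd h1 (not_le.2 (Order.lt_succ _))
    rw [Function.not_injective_iff] at hni
    obtain ⟨i, j, hfij, hij⟩ := hni
    refine ⟨_, ⟨fun k => if k = i then some (f i) else if k = j then some (f j) else none,
      ?_, ⟨i, j, hij, by simp, by simp [Ne.symm hij, hfij]⟩, rfl⟩, ?_⟩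
    · refine Set.Countable.mono ?_ ((Set.countable_singleton j).insert i)
      intro k hk
      simp only [mem_setOf_eq] at hk
      by_cases h1 : k = i
      · simp [h1]
      by_cases h2 : k = j
      · simp [h2]
      · simp [h1, h2] at hk
    · intro k d hk
      by_cases h1 : k = i
      · subst h1
        simp only [if_pos rfl] at hk
        exact Option.some.inj hk
      by_cases h2 : k = j
      · subst h2
        simp only [if_neg h1, if_pos rfl] at hk
        exact Option.some.inj hk
      · simp [h1, h2] at hk
  · rintro 𝒱 h𝒱 hcard hcover
    have hch := fun (T : ↥𝒱) => h𝒱 T.2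
    choose s hcnt hw hTeq using hch
    choose wi wj hwij hwne hweq using hw
    set W : Set I := ⋃ T : ↥𝒱, {wi T, wj T} with hWdef
    have hWle : #W ≤ continuum := by
      calc #↥W ≤ #↥𝒱 * ⨆ T : ↥𝒱, #(↥({wi T, wj T} : Set I)) := Cardinal.mk_iUnion_le _
        _ ≤ continuum * continuum := by
            refine mul_le_mul' hcard (ciSup_le' fun T => ?_)
            exact le_trans Cardinal.mk_le_aleph0 aleph0_le_continuum
        _ = continuum := Cardinal.mul_eq_self aleph0_le_continuum
    obtain ⟨g⟩ := Cardinal.le_def _ _ |>.1 (hWle.trans hD.symm.le)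
    set f : I → D := fun k => if h : k ∈ W then g ⟨k, h⟩ else Classical.arbitrary D with hfdef
    have hf : f ∈ ⋃₀ 𝒱 := hcover ▸ mem_univ f
    obtain ⟨T, hT, hfT⟩ := hf
    set T' : ↥𝒱 := ⟨T, hT⟩
    have hfT2 : f ∈ {f : I → D | ∀ i : I, ∀ d : D, s T' i = some d → f i = d} := by
      rw [← hTeq T']; exact hfT
    obtain ⟨d, hd⟩ := Option.ne_none_iff_exists'.1 (hwne T')
    have h1 : f (wi T') = d := hfT2 _ _ hd
    have h2 : f (wj T') = d := hfT2 _ _ (by rw [← hweq T']; exact hd)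
    have hiW : wi T' ∈ W := mem_iUnion.2 ⟨T', by simp⟩
    have hjW : wj T' ∈ W := mem_iUnion.2 ⟨T', by simp⟩
    have e1 : f (wi T') = g ⟨wi T', hiW⟩ := dif_pos hiW
    have e2 : f (wj T') = g ⟨wj T', hjW⟩ := dif_pos hjW
    have : g ⟨wi T', hiW⟩ = g ⟨wj T', hjW⟩ := by rw [← e1, ← e2, h1, h2]
    exact hwij T' (Subtype.ext_iff.1 (g.injective this))
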